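/- (Consistency error bound for the β-average) Let y : [t_{n−1}, t_{n+1}] → ℝ be twice continuously differentiable, k_{n−1} = t_n − t_{n−1} > 0, k_n = t_{n+1} − t_n > 0, and let β₂, β₁, β₀ be the DLN weights for θ ∈ [0,1] and ε = (k_n−k_{n−1})/(k_n+k_{n−1}). Then there is a constant C (independent of y and of the step sizes) such that |β₂y(t_{n+1}) + β₁y(t_n) + β₀y(t_{n−1}) − y(t_{n,β})|² ≤ C (k_n + k_{n−1})³ ∫_{t_{n−1}}^{t_{n+1}} |y″(t)|² dt, where t_{n,β} = β₂t_{n+1} + β₁t_n + β₀t_{n−1}. -/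

import Mathlib

set_option maxHeartbeats 1000000

open Set MeasureTheory intervalIntegral

lemma cs_aux {f : ℝ → ℝ} {a b : ℝ} (hab : a ≤ b) (hf : ContinuousOn f (Set.Icc a b)) :
    (∫ t in a..b, |f t|)^2 ≤ (b - a) * ∫ t in a..b, (f t)^2 := by
  have huIcc : Set.uIcc a b = Set.Icc a b := Set.uIcc_of_le hab
  have hint1 : IntervalIntegrable (fun t => |f t|) volume a b :=
    ContinuousOn.intervalIntegrable (huIcc ▸ hf.abs)
  have hint2 : IntervalIntegrable (fun t => (f t)^2) volume a b :=
    ContinuousOn.intervalIntegrable (huIcc ▸ hf.pow 2)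
  set J := ∫ t in a..b, |f t| with hJdef
  set I := ∫ t in a..b, (f t)^2 with hIdef
  have hJ0 : 0 ≤ J := intervalIntegral.integral_nonneg hab (fun x _ => abs_nonneg _)
  have hI0 : 0 ≤ I := intervalIntegral.integral_nonneg hab (fun x _ => sq_nonneg _)
  have key : ∀ l : ℝ, 0 < l → J ≤ ((b - a) * l + I / l) / 2 := by
    intro l hl
    have hmono : J ≤ ∫ t in a..b, (l / 2 + (f t)^2 * (1 / (2 * l))) := by
      apply intervalIntegral.integral_mono_on hab hint1
      · exact (_root_.intervalIntegrable_const).add (hint2.mul_const _)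
      · intro x _
        have h2l : (0:ℝ) < 2 * l := by linarith
        rw [← mul_le_mul_iff_of_pos_right h2l]
        have e : (l / 2 + f x ^ 2 * (1 / (2 * l))) * (2 * l) = l * l + f x ^ 2 := by
          field_simp
        rw [e]
        nlinarith [sq_nonneg (|f x| - l), sq_abs (f x)]
    have hcalc : (∫ t in a..b, (l / 2 + (f t)^2 * (1 / (2 * l))))
        = (b - a) * (l / 2) + I * (1 / (2 * l)) := by
      rw [intervalIntegral.integral_add _root_.intervalIntegrable_const (hint2.mul_const _),
        intervalIntegral.integral_const, intervalIntegral.integral_mul_const]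
      simp [smul_eq_mul]
      exact Or.inl rfl
    rw [hcalc] at hmono
    calc J ≤ (b - a) * (l / 2) + I * (1 / (2 * l)) := hmono
      _ = ((b - a) * l + I / l) / 2 := by ring
  rcases eq_or_lt_of_le hab with rfl | hab'
  · simp [hJdef, hIdef]
  rcases eq_or_lt_of_le hI0 with hIzero | hIpos
  · have hJz : J ≤ 0 := by
      by_contra h
      push_neg at h
      have hl : 0 < J / (b - a) := div_pos h (by linarith)
      have hk := key (J / (b - a)) hl
      rw [← hIzero] at hk
      have hk2 : J ≤ (b - a) * (J / (b - a)) / 2 := by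
        simpa using hk
      rw [mul_div_cancel₀ _ (by linarith : b - a ≠ 0)] at hk2
      linarith
    have : J = 0 := le_antisymm hJz hJ0
    rw [this, ← hIzero]
    norm_num
  · set l := Real.sqrt (I / (b - a)) with hldef
    have hl : 0 < l := Real.sqrt_pos.mpr (div_pos hIpos (by linarith))
    have hl2 : l^2 = I / (b - a) := Real.sq_sqrt (le_of_lt (div_pos hIpos (by linarith)))
    have hbl : (b - a) * l^2 = I := by
      rw [hl2]
      exact mul_div_cancel₀ I (by linarith : b - a ≠ 0)
    have hJl : J * l ≤ I := by
      have hk := key l hl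
      have h3 : ((b - a) * l + I / l) / 2 * l = ((b - a) * l^2 + I) / 2 := by
        field_simp
      calc J * l ≤ ((b - a) * l + I / l) / 2 * l := mul_le_mul_of_nonneg_right hk hl.le
        _ = ((b - a) * l^2 + I) / 2 := h3
        _ = I := by rw [hbl]; ring
    have h4 : (J * l)^2 ≤ I^2 := by nlinarith [mul_nonneg hJ0 hl.le]
    nlinarith [mul_le_mul_of_nonneg_left h4 (by linarith : (0:ℝ) ≤ b - a), hbl, sq_nonneg J,
      hIpos, hJ0]

lemma taylor_aux {a b c : ℝ} (hab : a < b) (hc : c ∈ Set.Icc a b) {y : ℝ → ℝ}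
    (hy : ContDiffOn ℝ 2 y (Set.Icc a b)) {t : ℝ} (ht : t ∈ Set.Icc a b) :
    |y t - y c - derivWithin y (Set.Icc a b) c * (t - c)|
      ≤ |t - c| * ∫ s in a..b, |derivWithin (derivWithin y (Set.Icc a b)) (Set.Icc a b) s| := by
  set Y1 := derivWithin y (Set.Icc a b) with hY1def
  set Y2 := derivWithin Y1 (Set.Icc a b) with hY2def
  have hu : UniqueDiffOn ℝ (Set.Icc a b) := uniqueDiffOn_Icc hab
  have hY1cd : ContDiffOn ℝ 1 Y1 (Set.Icc a b) := hy.derivWithin hu (by norm_num)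
  have hY1cont : ContinuousOn Y1 (Set.Icc a b) := hY1cd.continuousOn
  have hY2cont : ContinuousOn Y2 (Set.Icc a b) := hY1cd.continuousOn_derivWithin hu le_rfl
  -- derivatives on the interior
  have hder1 : ∀ x ∈ Set.Ioo a b, HasDerivAt y (Y1 x) x := by
    intro x hx
    have hmem : Set.Icc a b ∈ nhds x := Icc_mem_nhds hx.1 hx.2
    have hdiff : DifferentiableWithinAt ℝ y (Set.Icc a b) x :=
      (hy.differentiableOn (by norm_num)) x (Set.Ioo_subset_Icc_self hx)
    have h1 : Y1 x = deriv y x := by rw [hY1def, derivWithin_of_mem_nhds hmem]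
    rw [h1]
    exact (hdiff.differentiableAt hmem).hasDerivAt
  have hder2 : ∀ x ∈ Set.Ioo a b, HasDerivAt Y1 (Y2 x) x := by
    intro x hx
    have hmem : Set.Icc a b ∈ nhds x := Icc_mem_nhds hx.1 hx.2
    have hdiff : DifferentiableWithinAt ℝ Y1 (Set.Icc a b) x :=
      (hY1cd.differentiableOn (by norm_num)) x (Set.Ioo_subset_Icc_self hx)
    have h1 : Y2 x = deriv Y1 x := by rw [hY2def, derivWithin_of_mem_nhds hmem]
    rw [h1]
    exact (hdiff.differentiableAt hmem).hasDerivAt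
  -- FTC for any u v in Icc a b
  have ftc : ∀ (f g : ℝ → ℝ), ContinuousOn f (Set.Icc a b) → ContinuousOn g (Set.Icc a b) →
      (∀ x ∈ Set.Ioo a b, HasDerivAt f (g x) x) →
      ∀ u ∈ Set.Icc a b, ∀ v ∈ Set.Icc a b, ∫ s in u..v, g s = f v - f u := by
    intro f g hfc hgc hfg u hu' v hv'
    have key : ∀ p q : ℝ, p ∈ Set.Icc a b → q ∈ Set.Icc a b → p ≤ q →
        ∫ s in p..q, g s = f q - f p := by
      intro p q hp hq hpq
      apply intervalIntegral.integral_eq_sub_of_hasDeriv_right_of_le hpq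
      · exact hfc.mono (Set.Icc_subset_Icc hp.1 hq.2)
      · intro x hx
        exact (hfg x ⟨lt_of_le_of_lt hp.1 hx.1, lt_of_lt_of_le hx.2 hq.2⟩).hasDerivWithinAt
      · exact ContinuousOn.intervalIntegrable
          ((hgc.mono (Set.Icc_subset_Icc hp.1 hq.2)).mono (by rw [Set.uIcc_of_le hpq]))
    rcases le_total u v with h | h
    · exact key u v hu' hv' h
    · rw [intervalIntegral.integral_symm, key v u hv' hu' h]; ring
  have ftc1 := ftc y Y1 hy.continuousOn hY1cont hder1
  have ftc2 := ftc Y1 Y2 hY1cont hY2cont hder2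
  set J := ∫ s in a..b, |Y2 s| with hJdef
  have hY2int : IntervalIntegrable (fun s => |Y2 s|) volume a b :=
    ContinuousOn.intervalIntegrable ((Set.uIcc_of_le hab.le) ▸ hY2cont.abs)
  -- bound on |Y1 s - Y1 c|
  have hbound : ∀ s ∈ Set.Icc a b, |Y1 s - Y1 c| ≤ J := by
    intro s hs
    rw [← ftc2 c hc s hs]
    have h1 : |∫ u in c..s, Y2 u| ≤ abs (∫ u in c..s, |Y2 u|) := by
      simpa [Real.norm_eq_abs] using
        intervalIntegral.norm_integral_le_abs_integral_norm (a := c) (b := s) (f := Y2)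
          (μ := volume)
    refine h1.trans ?_
    have h2 : abs (∫ u in c..s, |Y2 u|) ≤ abs (∫ s in a..b, |Y2 s|) := by
      apply intervalIntegral.abs_integral_mono_interval
      · rw [Set.uIoc_of_le hab.le]
        exact Set.Ioc_subset_Ioc (le_min hc.1 hs.1) (max_le hc.2 hs.2)
      · exact Filter.Eventually.of_forall (fun x => abs_nonneg _)
      · exact hY2int
    refine h2.trans ?_
    rw [abs_of_nonneg (intervalIntegral.integral_nonneg hab.le (fun x _ => abs_nonneg _))]
  -- main computation
  have hsubIcc : Set.uIcc c t ⊆ Set.Icc a b := by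
    rw [← Set.uIcc_of_le hab.le]
    exact Set.uIcc_subset_uIcc (by rwa [Set.uIcc_of_le hab.le]) (by rwa [Set.uIcc_of_le hab.le])
  have hY1int : IntervalIntegrable Y1 volume c t :=
    ContinuousOn.intervalIntegrable (hY1cont.mono hsubIcc)
  have heq : y t - y c - Y1 c * (t - c) = ∫ s in c..t, (Y1 s - Y1 c) := by
    rw [intervalIntegral.integral_sub hY1int intervalIntegrable_const,
        ftc1 c hc t ht, intervalIntegral.integral_const]
    simp only [smul_eq_mul]
    ring
  rw [heq]
  have hnorm : ‖∫ s in c..t, (Y1 s - Y1 c)‖ ≤ J * |t - c| := by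
    apply intervalIntegral.norm_integral_le_of_norm_le_const
    intro x hx
    rw [Real.norm_eq_abs]
    exact hbound x (hsubIcc (Set.uIoc_subset_uIcc hx))
  rw [Real.norm_eq_abs] at hnorm
  linarith [hnorm, abs_nonneg (t - c), mul_comm J |t - c|]

lemma beta_facts (θ ε : ℝ) (hθ0 : 0 ≤ θ) (hθ1 : θ ≤ 1) (hε0 : -1 < ε) (hε1 : ε < 1) :
    (1/4) * (1 + (1 - θ^2)/(1 + ε*θ)^2 + ε^2 * θ * (1 - θ^2)/(1 + ε*θ)^2 + θ)
      + (1/2) * (1 - (1 - θ^2)/(1 + ε*θ)^2)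
      + (1/4) * (1 + (1 - θ^2)/(1 + ε*θ)^2 - ε^2 * θ * (1 - θ^2)/(1 + ε*θ)^2 - θ) = 1 ∧
    0 ≤ (1/4) * (1 + (1 - θ^2)/(1 + ε*θ)^2 + ε^2 * θ * (1 - θ^2)/(1 + ε*θ)^2 + θ) ∧
    0 ≤ (1/4) * (1 + (1 - θ^2)/(1 + ε*θ)^2 - ε^2 * θ * (1 - θ^2)/(1 + ε*θ)^2 - θ) ∧
    (1/4) * (1 + (1 - θ^2)/(1 + ε*θ)^2 + ε^2 * θ * (1 - θ^2)/(1 + ε*θ)^2 + θ) * (1+ε) ≤ 3 ∧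
    (1/4) * (1 + (1 - θ^2)/(1 + ε*θ)^2 - ε^2 * θ * (1 - θ^2)/(1 + ε*θ)^2 - θ) ≤ 5/4 ∧
    (1/4) * (1 + (1 - θ^2)/(1 + ε*θ)^2 + ε^2 * θ * (1 - θ^2)/(1 + ε*θ)^2 + θ) * (1+ε)
      - (1/4) * (1 + (1 - θ^2)/(1 + ε*θ)^2 - ε^2 * θ * (1 - θ^2)/(1 + ε*θ)^2 - θ) * (1-ε)
      ≤ 1+ε ∧
    -(1-ε) ≤
      (1/4) * (1 + (1 - θ^2)/(1 + ε*θ)^2 + ε^2 * θ * (1 - θ^2)/(1 + ε*θ)^2 + θ) * (1+ε)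
      - (1/4) * (1 + (1 - θ^2)/(1 + ε*θ)^2 - ε^2 * θ * (1 - θ^2)/(1 + ε*θ)^2 - θ) * (1-ε) := by
  have hp : 0 < 1 + ε*θ := by
    rcases le_or_gt 0 ε with h | h
    · nlinarith
    · nlinarith
  have hp2 : (0:ℝ) < (1 + ε*θ)^2 := by positivity
  have h1θ : (0:ℝ) ≤ 1 - θ^2 := by nlinarith
  have hε2 : ε^2 ≤ 1 := by nlinarith
  have hε2θ : ε^2*θ ≤ 1 := by nlinarith [mul_nonneg (sq_nonneg ε) (by linarith : (0:ℝ) ≤ 1-θ)]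
  have key_r : ε^2 * θ * (1 - θ^2)/(1 + ε*θ)^2 = ε^2*θ*((1 - θ^2)/(1 + ε*θ)^2) := by ring
  rw [key_r]
  set q := (1 - θ^2)/(1 + ε*θ)^2 with hq
  have hq0 : 0 ≤ q := div_nonneg h1θ hp2.le
  have hqp : q * (1 + ε*θ)^2 = 1 - θ^2 := div_mul_cancel₀ _ hp2.ne'
  clear_value q
  clear hq key_r
  have hq1 : (1 - θ^2)*(1+ε) ≤ 4*(1 + ε*θ)^2 := by
    rcases le_or_gt ε 0 with h | h
    · nlinarith [mul_nonneg (show (0:ℝ) ≤ (1 + ε*θ) - (1-θ) by nlinarith) hp.le,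
        mul_nonneg (show (0:ℝ) ≤ 1-θ by linarith) (show (0:ℝ) ≤ (1 + ε*θ) - (1+ε) by nlinarith),
        mul_nonneg (show (0:ℝ) ≤ 1-θ by linarith) (show (0:ℝ) ≤ 1+ε by linarith)]
    · nlinarith [mul_nonneg h.le hθ0, sq_nonneg (ε*θ), mul_nonneg hθ0 hθ0,
        mul_nonneg (mul_nonneg h.le hθ0) hθ0]
  have hq2 : (1 - θ^2)*(1 - ε^2*θ) ≤ 4*(1 + ε*θ)^2 := by
    have f1 : 1 - ε^2*θ ≤ (1 - ε*θ)*(1 + ε*θ) := by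
      nlinarith [mul_nonneg (sq_nonneg ε) (mul_nonneg hθ0 (by linarith : (0:ℝ) ≤ 1-θ))]
    have f2 : 1 - θ^2 ≤ 2*(1 + ε*θ) := by nlinarith [mul_nonneg hθ0 (by linarith : (0:ℝ) ≤ 1+ε)]
    have f3 : 1 - ε*θ ≤ 2 := by nlinarith [mul_nonneg hθ0 (by linarith : (0:ℝ) ≤ 1+ε)]
    have f4 : (0:ℝ) ≤ 1 - ε*θ := by nlinarith [mul_nonneg hθ0 (by linarith : (0:ℝ) ≤ 1-ε)]
    have g1 : (1 - θ^2)*(1 - ε^2*θ) ≤ (1 - θ^2)*((1 - ε*θ)*(1 + ε*θ)) :=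
      mul_le_mul_of_nonneg_left f1 h1θ
    have g2 : (1 - θ^2)*(1 - ε*θ) ≤ (2*(1 + ε*θ))*2 :=
      mul_le_mul f2 f3 f4 (by linarith)
    have g3 : ((1 - θ^2)*(1 - ε*θ))*(1 + ε*θ) ≤ ((2*(1 + ε*θ))*2)*(1 + ε*θ) :=
      mul_le_mul_of_nonneg_right g2 hp.le
    nlinarith [g1, g3]
  -- q-versions
  have hQ1 : q*(1+ε) ≤ 4 := by
    rw [← mul_le_mul_iff_of_pos_right hp2]
    calc q*(1+ε)*(1 + ε*θ)^2 = (1 - θ^2)*(1+ε) := by rw [← hqp]; ring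
      _ ≤ 4*(1 + ε*θ)^2 := hq1
      _ = 4*(1 + ε*θ)^2 := rfl
  have hQ2 : q*(1 - ε^2*θ) ≤ 4 := by
    rw [← mul_le_mul_iff_of_pos_right hp2]
    calc q*(1 - ε^2*θ)*(1 + ε*θ)^2 = (1 - θ^2)*(1 - ε^2*θ) := by rw [← hqp]; ring
      _ ≤ 4*(1 + ε*θ)^2 := hq2
  have hr0 : 0 ≤ ε^2*θ*q := mul_nonneg (mul_nonneg (sq_nonneg ε) hθ0) hq0
  refine ⟨by ring, ?_, ?_, ?_, ?_, ?_, ?_⟩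
  · nlinarith [hr0, hq0]
  · nlinarith [mul_nonneg hq0 (show (0:ℝ) ≤ 1 - ε^2*θ by linarith)]
  · -- β₂ * (1+ε) ≤ 3
    have h4a : (1+θ)*(1+ε) ≤ 4 := by nlinarith
    have h4c : ε^2*θ*(q*(1+ε)) ≤ ε^2*θ*4 :=
      mul_le_mul_of_nonneg_left hQ1 (mul_nonneg (sq_nonneg ε) hθ0)
    nlinarith [hQ1, h4a, h4c, hε2θ, mul_nonneg hq0 (show (0:ℝ) ≤ 1+ε by linarith)]
  · -- β₀ ≤ 5/4
    nlinarith [hQ2]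
  · -- upper bound for tβ
    rw [← mul_le_mul_iff_of_pos_right (show (0:ℝ) < 2*(1 + ε*θ) by linarith)]
    have e : ((1/4) * (1 + q + ε^2*θ*q + θ) * (1+ε)
        - (1/4) * (1 + q - ε^2*θ*q - θ) * (1-ε)) * (2*(1 + ε*θ))
        = (θ+ε)*(1 + ε*θ) + ε*(1 - θ^2) := by
      linear_combination ε * hqp
    rw [e]
    nlinarith [mul_nonneg hθ0 (sq_nonneg (1+ε))]
  · -- lower bound for tβ
    rw [← mul_le_mul_iff_of_pos_right (show (0:ℝ) < 2*(1 + ε*θ) by linarith)]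
    have e : ((1/4) * (1 + q + ε^2*θ*q + θ) * (1+ε)
        - (1/4) * (1 + q - ε^2*θ*q - θ) * (1-ε)) * (2*(1 + ε*θ))
        = (θ+ε)*(1 + ε*θ) + ε*(1 - θ^2) := by
      linear_combination ε * hqp
    rw [e]
    nlinarith [mul_nonneg hθ0 (mul_nonneg (show (0:ℝ) ≤ 1+ε by linarith)
      (show (0:ℝ) ≤ 3-ε by linarith))]

lemma second_deriv_eq {a b : ℝ} (hab : a < b) {y : ℝ → ℝ}
    (hy : ContDiffOn ℝ 2 y (Set.Icc a b)) {x : ℝ} (hx : x ∈ Set.Ioo a b) :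
    deriv (deriv y) x = derivWithin (derivWithin y (Set.Icc a b)) (Set.Icc a b) x := by
  have hder1 : ∀ z ∈ Set.Ioo a b, deriv y z = derivWithin y (Set.Icc a b) z := by
    intro z hz
    have hmem : Set.Icc a b ∈ nhds z := Icc_mem_nhds hz.1 hz.2
    rw [derivWithin_of_mem_nhds hmem]
  have hev : deriv y =ᶠ[nhds x] derivWithin y (Set.Icc a b) :=
    Filter.eventuallyEq_of_mem (Ioo_mem_nhds hx.1 hx.2) hder1
  rw [hev.deriv_eq]
  have hmem : Set.Icc a b ∈ nhds x := Icc_mem_nhds hx.1 hx.2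
  exact (derivWithin_of_mem_nhds hmem).symm

theorem dln_beta_average_consistency_bound :
    ∃ C : ℝ, 0 < C ∧ ∀ (θ : ℝ), θ ∈ Set.Icc (0:ℝ) 1 →
      ∀ (tnm tn tnp : ℝ) (y : ℝ → ℝ),
      tnm < tn → tn < tnp →
      ContDiffOn ℝ 2 y (Set.Icc tnm tnp) →
      let kn : ℝ := tnp - tn
      let knm : ℝ := tn - tnm
      let ε : ℝ := (kn - knm) / (kn + knm)
      let β₂ : ℝ := (1/4) * (1 + (1 - θ^2)/(1 + ε*θ)^2 + ε^2 * θ * (1 - θ^2)/(1 + ε*θ)^2 + θ)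
      let β₁ : ℝ := (1/2) * (1 - (1 - θ^2)/(1 + ε*θ)^2)
      let β₀ : ℝ := (1/4) * (1 + (1 - θ^2)/(1 + ε*θ)^2 - ε^2 * θ * (1 - θ^2)/(1 + ε*θ)^2 - θ)
      let tβ : ℝ := β₂ * tnp + β₁ * tn + β₀ * tnm
      |β₂ * y tnp + β₁ * y tn + β₀ * y tnm - y tβ|^2
        ≤ C * (kn + knm)^3 * ∫ t in tnm..tnp, |deriv (deriv y) t|^2 := by
  refine ⟨16, by norm_num, ?_⟩
  intro θ hθ tnm tn tnp y h1 h2 hy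
  intro kn knm ε β₂ β₁ β₀ tβ
  obtain ⟨hθ0, hθ1⟩ := hθ
  have hab : tnm < tnp := h1.trans h2
  have hkn : (0:ℝ) < kn := sub_pos.mpr h2
  have hknm : (0:ℝ) < knm := sub_pos.mpr h1
  have hk : (0:ℝ) < kn + knm := by linarith
  have hε0 : -1 < ε := by
    show -1 < (kn - knm) / (kn + knm)
    rw [lt_div_iff₀ hk]; linarith
  have hε1 : ε < 1 := by
    show (kn - knm) / (kn + knm) < 1
    rw [div_lt_one hk]; linarith
  obtain ⟨hsum0, hβ₂0, hβ₀0, hβ₂1, hβ₀1, hup, hlo⟩ := beta_facts θ ε hθ0 hθ1 hε0 hε1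
  have hsum : β₂ + β₁ + β₀ = 1 := hsum0
  have hβ₂nn : 0 ≤ β₂ := hβ₂0
  have hβ₀nn : 0 ≤ β₀ := hβ₀0
  have hβ₂e : β₂ * (1+ε) ≤ 3 := hβ₂1
  have hβ₀e : β₀ ≤ 5/4 := hβ₀1
  have hupe : β₂ * (1+ε) - β₀ * (1-ε) ≤ 1+ε := hup
  have hloe : -(1-ε) ≤ β₂ * (1+ε) - β₀ * (1-ε) := hlo
  clear hsum0 hβ₂0 hβ₀0 hβ₂1 hβ₀1 hup hlo
  have hkn_eq0 : kn = tnp - tn := rfl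
  have hknm_eq0 : knm = tn - tnm := rfl
  have htβ_eq : tβ = β₂ * tnp + β₁ * tn + β₀ * tnm := rfl
  have hεk : ε * (kn + knm) = kn - knm := div_mul_cancel₀ _ hk.ne'
  clear_value kn knm ε β₂ β₁ β₀ tβ
  -- relations between ε and step sizes
  have e1 : (1+ε) * (kn + knm) = 2 * kn := by linear_combination hεk
  have e0 : (1-ε) * (kn + knm) = 2 * knm := by linear_combination -hεk
  -- step-size bounds on the weights
  have hβ₂kn : β₂ * kn ≤ (3/2) * (kn + knm) := by
    have m1 : β₂ * (1+ε) * (kn + knm) ≤ 3 * (kn + knm) :=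
      mul_le_mul_of_nonneg_right hβ₂e hk.le
    have m2 : β₂ * (1+ε) * (kn + knm) = 2 * (β₂ * kn) := by linear_combination β₂ * e1
    linarith
  have hβ₀knm : β₀ * knm ≤ (5/4) * (kn + knm) := by
    have m1 : β₀ * knm ≤ (5/4) * knm := mul_le_mul_of_nonneg_right hβ₀e hknm.le
    nlinarith
  have hkn_eq : kn = tnp - tn := hkn_eq0
  have hknm_eq : knm = tn - tnm := hknm_eq0
  have htβ : tβ - tn = β₂ * kn - β₀ * knm := by
    rw [htβ_eq, hkn_eq, hknm_eq]
    linear_combination tn * hsum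
  have hup' : β₂ * kn - β₀ * knm ≤ kn := by
    have m1 : (β₂ * (1+ε) - β₀ * (1-ε)) * (kn + knm) ≤ (1+ε) * (kn + knm) :=
      mul_le_mul_of_nonneg_right hupe hk.le
    have m2 : (β₂ * (1+ε) - β₀ * (1-ε)) * (kn + knm) = 2 * (β₂ * kn - β₀ * knm) := by
      linear_combination β₂ * e1 - β₀ * e0
    linarith
  have hlo' : -knm ≤ β₂ * kn - β₀ * knm := by
    have m1 : (-(1-ε)) * (kn + knm) ≤ (β₂ * (1+ε) - β₀ * (1-ε)) * (kn + knm) :=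
      mul_le_mul_of_nonneg_right hloe hk.le
    have m2 : (β₂ * (1+ε) - β₀ * (1-ε)) * (kn + knm) = 2 * (β₂ * kn - β₀ * knm) := by
      linear_combination β₂ * e1 - β₀ * e0
    have m3 : (-(1-ε)) * (kn + knm) = -(2 * knm) := by linear_combination -e0
    linarith
  have htβmem : tβ ∈ Set.Icc tnm tnp := by
    constructor
    · have := hlo'; rw [← htβ] at this; rw [hknm_eq] at this; linarith
    · have := hup'; rw [← htβ] at this; rw [hkn_eq] at this; linarith
  -- Taylor estimates
  have hcm : tn ∈ Set.Icc tnm tnp := ⟨h1.le, h2.le⟩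
  set D : ℝ → ℝ := derivWithin y (Set.Icc tnm tnp) with hD
  set D2 : ℝ → ℝ := derivWithin D (Set.Icc tnm tnp) with hD2
  set J : ℝ := ∫ s in tnm..tnp, |D2 s| with hJ
  have hJ0 : 0 ≤ J := intervalIntegral.integral_nonneg hab.le (fun x _ => abs_nonneg _)
  have T : ∀ t ∈ Set.Icc tnm tnp,
      |y t - y tn - D tn * (t - tn)| ≤ |t - tn| * J :=
    fun t ht => taylor_aux hab hcm hy ht
  have Tb : |y tnp - y tn - D tn * (tnp - tn)| ≤ kn * J := by
    have habs : |tnp - tn| = kn := by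
      rw [hkn_eq]; exact abs_of_pos (by linarith)
    have h' := T tnp ⟨hab.le, le_rfl⟩
    rwa [habs] at h'
  have Ta : |y tnm - y tn - D tn * (tnm - tn)| ≤ knm * J := by
    have habs : |tnm - tn| = knm := by
      rw [hknm_eq, abs_sub_comm]; exact abs_of_pos (by linarith)
    have h' := T tnm ⟨le_rfl, hab.le⟩
    rwa [habs] at h'
  have Tβ : |y tβ - y tn - D tn * (tβ - tn)| ≤ (kn + knm) * J := by
    have h' := T tβ htβmem
    have habs : |tβ - tn| ≤ kn + knm := by
      obtain ⟨hm1, hm2⟩ := htβmem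
      rw [abs_le]
      constructor
      · rw [hkn_eq, hknm_eq]; linarith
      · rw [hkn_eq, hknm_eq]; linarith
    exact h'.trans (mul_le_mul_of_nonneg_right habs hJ0)
  -- decomposition of the error
  have hE : β₂ * y tnp + β₁ * y tn + β₀ * y tnm - y tβ
      = β₂ * (y tnp - y tn - D tn * (tnp - tn))
        + β₀ * (y tnm - y tn - D tn * (tnm - tn))
        - (y tβ - y tn - D tn * (tβ - tn)) := by
    rw [htβ_eq]
    linear_combination (y tn - D tn * tn) * hsum
    -- global bound on the error
  have hEbound : |β₂ * y tnp + β₁ * y tn + β₀ * y tnm - y tβ| ≤ 4 * ((kn + knm) * J) := by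
    rw [hE]
    set Rb := y tnp - y tn - D tn * (tnp - tn) with hRb
    set Ra := y tnm - y tn - D tn * (tnm - tn) with hRa
    set Rc := y tβ - y tn - D tn * (tβ - tn) with hRc
    have h1' : |β₂ * Rb + β₀ * Ra - Rc| ≤ |β₂ * Rb| + |β₀ * Ra| + |Rc| := by
      calc |β₂ * Rb + β₀ * Ra - Rc| ≤ |β₂ * Rb + β₀ * Ra| + |Rc| := abs_sub _ _
        _ ≤ |β₂ * Rb| + |β₀ * Ra| + |Rc| := by linarith [abs_add_le (β₂ * Rb) (β₀ * Ra)]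
    have h2' : |β₂ * Rb| = β₂ * |Rb| := by rw [abs_mul, abs_of_nonneg hβ₂nn]
    have h3' : |β₀ * Ra| = β₀ * |Ra| := by rw [abs_mul, abs_of_nonneg hβ₀nn]
    have hb1 : β₂ * |Rb| ≤ β₂ * (kn * J) := mul_le_mul_of_nonneg_left Tb hβ₂nn
    have hb2 : β₂ * (kn * J) ≤ (3/2 * (kn + knm)) * J := by
      rw [← mul_assoc]
      exact mul_le_mul_of_nonneg_right hβ₂kn hJ0
    have ha1 : β₀ * |Ra| ≤ β₀ * (knm * J) := mul_le_mul_of_nonneg_left Ta hβ₀nn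
    have ha2 : β₀ * (knm * J) ≤ (5/4 * (kn + knm)) * J := by
      rw [← mul_assoc]
      exact mul_le_mul_of_nonneg_right hβ₀knm hJ0
    have hkJ : (0:ℝ) ≤ (kn + knm) * J := mul_nonneg hk.le hJ0
    calc |β₂ * Rb + β₀ * Ra - Rc| ≤ |β₂ * Rb| + |β₀ * Ra| + |Rc| := h1'
      _ ≤ (3/2 * (kn + knm)) * J + (5/4 * (kn + knm)) * J + (kn + knm) * J := by
          rw [h2', h3']; linarith [Tβ]
      _ ≤ 4 * ((kn + knm) * J) := by nlinarith [hkJ]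
  have habsnn : (0:ℝ) ≤ |β₂ * y tnp + β₁ * y tn + β₀ * y tnm - y tβ| := abs_nonneg _
  have hsq : |β₂ * y tnp + β₁ * y tn + β₀ * y tnm - y tβ|^2 ≤ 16 * ((kn + knm) * J)^2 := by
    nlinarith [hEbound, habsnn, mul_nonneg hk.le hJ0]
  -- Cauchy–Schwarz for the second derivative
  have hD2cont : ContinuousOn D2 (Set.Icc tnm tnp) := by
    rw [hD2, hD]
    exact (hy.derivWithin (uniqueDiffOn_Icc hab) (by norm_num)).continuousOn_derivWithin
      (uniqueDiffOn_Icc hab) le_rfl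
  have hcs : J^2 ≤ (tnp - tnm) * ∫ t in tnm..tnp, (D2 t)^2 := by
    rw [hJ]
    exact cs_aux hab.le hD2cont
  -- identify the integrand
  have hIeq : (∫ t in tnm..tnp, |deriv (deriv y) t|^2) = ∫ t in tnm..tnp, (D2 t)^2 := by
    apply intervalIntegral.integral_congr_ae
    have hne : ∀ᵐ x : ℝ, x ≠ tnp := by
      rw [MeasureTheory.ae_iff]
      simp only [ne_eq, not_not, Set.setOf_eq_eq_singleton]
      exact measure_singleton tnp
    filter_upwards [hne] with x hx hmem
    rw [Set.uIoc_of_le hab.le] at hmem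
    have hxIoo : x ∈ Set.Ioo tnm tnp := ⟨hmem.1, lt_of_le_of_ne hmem.2 hx⟩
    rw [second_deriv_eq hab hy hxIoo, ← hD, ← hD2, sq_abs]
  rw [hIeq]
  have hke : tnp - tnm = kn + knm := by rw [hkn_eq, hknm_eq]; ring
  rw [hke] at hcs
  have hfin : 16 * ((kn + knm) * J)^2 ≤ 16 * (kn + knm)^3 * (∫ t in tnm..tnp, (D2 t)^2) := by
    nlinarith [mul_le_mul_of_nonneg_left hcs (show (0:ℝ) ≤ 16 * (kn + knm)^2 by positivity)]
  linarith [hsq, hfin]
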